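/- arXiv:1903.10455 — 2 statements merged into one kernel-verified Lean document; each statement's English description precedes it below -/
import Mathlib

section
/- Let t ∈ (0,1), let A₁, …, A_m be pairwise commuting positive definite n×n complex matrices, and let w₁, …, w_m be positive reals with Σ_j w_j = 1. Then the unique positive definite matrix minimizing X ↦ Σ_{j=1}^m w_j Tr((1-t)A_j + tX - A_j^{1-t}X^t) over positive definite matrices commuting with all A_j is the unique positive definite solution (commuting with all A_j) of the equation X = Σ_{j=1}^m w_j A_j^{1-t} X^t, i.e., the weighted power mean of order 1−t of A₁, …, A_m. -/
open Matrix
open scoped ComplexOrder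

/-- The real power `A^s` of a positive definite matrix, via the functional calculus. -/
noncomputable def matPow {n : ℕ} (A : Matrix (Fin n) (Fin n) ℂ) (s : ℝ) :
    Matrix (Fin n) (Fin n) ℂ :=
  cfc (fun x : ℝ => x ^ s) A

section Helpers

variable {n : ℕ}

/-! ### Scalar inequalities -/

private lemma cpb_bern_le {t r : ℝ} (ht0 : 0 < t) (ht1 : t < 1) (hr : 0 ≤ r) :
    r ^ t ≤ t * r + (1 - t) := by
  have h := rpow_one_add_le_one_add_mul_self (s := r - 1) (by linarith) (p := t) ht0.le ht1.le
  have hr1 : 1 + (r - 1) = r := by ring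
  rw [hr1] at h
  nlinarith [h]

private lemma cpb_bern_lt {t r : ℝ} (ht0 : 0 < t) (ht1 : t < 1) (hr : 0 ≤ r) (hne : r ≠ 1) :
    r ^ t < t * r + (1 - t) := by
  have h := rpow_one_add_lt_one_add_mul_self (s := r - 1) (by linarith)
    (by intro h; exact hne (by linarith)) ht0 ht1
  have hr1 : 1 + (r - 1) = r := by ring
  rw [hr1] at h
  nlinarith [h]

private lemma cpb_amgm_le {t d x : ℝ} (ht0 : 0 < t) (ht1 : t < 1) (hd : 0 < d) (hx : 0 ≤ x) :
    d ^ (1 - t) * x ^ t ≤ t * x + (1 - t) * d := by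
  have hr : (0:ℝ) ≤ x / d := by positivity
  have h := cpb_bern_le ht0 ht1 hr
  have hxd : x / d * d = x := div_mul_cancel₀ x hd.ne'
  have h2 : (x / d) ^ t * d ≤ (t * (x / d) + (1 - t)) * d :=
    mul_le_mul_of_nonneg_right h hd.le
  have h3 : (x / d) ^ t * d = d ^ (1 - t) * x ^ t := by
    rw [Real.div_rpow hx hd.le, Real.rpow_sub hd, Real.rpow_one]
    field_simp
  rw [h3] at h2
  calc d ^ (1 - t) * x ^ t ≤ (t * (x / d) + (1 - t)) * d := h2
    _ = t * (x / d * d) + (1 - t) * d := by ring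
    _ = t * x + (1 - t) * d := by rw [hxd]

private lemma cpb_amgm_lt {t d x : ℝ} (ht0 : 0 < t) (ht1 : t < 1) (hd : 0 < d) (hx : 0 ≤ x)
    (hne : x ≠ d) : d ^ (1 - t) * x ^ t < t * x + (1 - t) * d := by
  have hr : (0:ℝ) ≤ x / d := by positivity
  have hne' : x / d ≠ 1 := by
    intro h
    exact hne (by field_simp at h; linarith)
  have h := cpb_bern_lt ht0 ht1 hr hne'
  have hxd : x / d * d = x := div_mul_cancel₀ x hd.ne'
  have h2 : (x / d) ^ t * d < (t * (x / d) + (1 - t)) * d :=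
    mul_lt_mul_of_pos_right h hd
  have h3 : (x / d) ^ t * d = d ^ (1 - t) * x ^ t := by
    rw [Real.div_rpow hx hd.le, Real.rpow_sub hd, Real.rpow_one]
    field_simp
  rw [h3] at h2
  calc d ^ (1 - t) * x ^ t < (t * (x / d) + (1 - t)) * d := h2
    _ = t * (x / d * d) + (1 - t) * d := by ring
    _ = t * x + (1 - t) * d := by rw [hxd]

private lemma cpb_tangent_le {t q lam : ℝ} (ht0 : 0 < t) (ht1 : t < 1) (hq : 0 < q)
    (hl : 0 ≤ lam) : lam ^ t ≤ q ^ t + t * q ^ (t - 1) * (lam - q) := by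
  have h := cpb_amgm_le ht0 ht1 hq hl
  have key : lam ^ t = q ^ (1 - t) * lam ^ t / q ^ (1 - t) := by
    field_simp
  rw [key, div_le_iff₀ (by positivity)]
  have hq1 : q ^ t * q ^ (1 - t) = q := by
    rw [← Real.rpow_add hq]; norm_num
  have hq2 : q ^ (t - 1) * q ^ (1 - t) = 1 := by
    rw [← Real.rpow_add hq]; norm_num
  have expand : (q ^ t + t * q ^ (t - 1) * (lam - q)) * q ^ (1 - t) = t * lam + (1 - t) * q := by
    linear_combination hq1 + t * (lam - q) * hq2
  linarith [h, expand]

private lemma cpb_tangent_lt {t q lam : ℝ} (ht0 : 0 < t) (ht1 : t < 1) (hq : 0 < q)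
    (hl : 0 ≤ lam) (hne : lam ≠ q) : lam ^ t < q ^ t + t * q ^ (t - 1) * (lam - q) := by
  have h := cpb_amgm_lt ht0 ht1 hq hl hne
  have key : lam ^ t = q ^ (1 - t) * lam ^ t / q ^ (1 - t) := by
    field_simp
  rw [key, div_lt_iff₀ (by positivity)]
  have hq1 : q ^ t * q ^ (1 - t) = q := by
    rw [← Real.rpow_add hq]; norm_num
  have hq2 : q ^ (t - 1) * q ^ (1 - t) = 1 := by
    rw [← Real.rpow_add hq]; norm_num
  have expand : (q ^ t + t * q ^ (t - 1) * (lam - q)) * q ^ (1 - t) = t * lam + (1 - t) * q := by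
    linear_combination hq1 + t * (lam - q) * hq2
  linarith [h, expand]

/-! ### Continuity and commutation for the matrix functional calculus -/

private lemma cpb_contOn_finite (f : ℝ → ℝ) {s : Set ℝ} (hs : s.Finite) : ContinuousOn f s := by
  have : DiscreteTopology s := hs.instDiscreteTopology
  rw [continuousOn_iff_continuous_restrict]
  exact continuous_of_discreteTopology

private lemma cpb_contOn_spec (f : ℝ → ℝ) (A : Matrix (Fin n) (Fin n) ℂ) :
    ContinuousOn f (spectrum ℝ A) :=
  cpb_contOn_finite f Matrix.finite_real_spectrum

private lemma cpb_contOn_img (f : ℝ → ℝ) (g : ℝ → ℝ) (A : Matrix (Fin n) (Fin n) ℂ) :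
    ContinuousOn f (g '' spectrum ℝ A) :=
  cpb_contOn_finite f (Matrix.finite_real_spectrum.image g)

private lemma cpb_commute_cfc {A B : Matrix (Fin n) (Fin n) ℂ} (f : ℝ → ℝ)
    (hAB : Commute B A) : Commute B (cfc f A) := by
  by_cases hA : _root_.IsSelfAdjoint A
  · have hfin : (spectrum ℝ A).Finite := Matrix.finite_real_spectrum
    set s : Finset ℝ := hfin.toFinset with hs
    set p : Polynomial ℝ := Lagrange.interpolate s id f with hp
    have hcong : cfc f A = cfc (fun x => Polynomial.eval x p) A := by
      apply cfc_congr
      intro x hx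
      have hx' : x ∈ s := by simpa [hs] using hx
      exact (Lagrange.eval_interpolate_at_node (r := f) (v := id) (s := s)
        (Set.injOn_id _) hx').symm
    rw [hcong, show (fun x => Polynomial.eval x p) = p.eval from rfl, cfc_polynomial p A hA,
      Polynomial.aeval_eq_sum_range]
    refine Commute.sum_right _ _ _ fun i _ => ?_
    exact Commute.smul_right (hAB.pow_right i) _
  · rw [cfc_apply_of_not_predicate A hA]
    exact Commute.zero_right B

/-! ### Spectrum and algebraic identities for `matPow` -/

private lemma cpb_spec_pos {A : Matrix (Fin n) (Fin n) ℂ} (hA : A.PosDef) :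
    ∀ x ∈ spectrum ℝ A, 0 < x := by
  rw [hA.1.spectrum_real_eq_range_eigenvalues]
  rintro x ⟨i, rfl⟩
  exact hA.eigenvalues_pos i

private lemma cpb_matPow_mul {A : Matrix (Fin n) (Fin n) ℂ} (hA : A.PosDef) (s r : ℝ) :
    matPow A s * matPow A r = matPow A (s + r) := by
  rw [matPow, matPow, matPow, ← cfc_mul _ _ A (cpb_contOn_spec _ A) (cpb_contOn_spec _ A)]
  apply cfc_congr
  intro x hx
  exact (Real.rpow_add (cpb_spec_pos hA x hx) s r).symm

private lemma cpb_matPow_zero {A : Matrix (Fin n) (Fin n) ℂ} (hA : _root_.IsSelfAdjoint A) :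
    matPow A 0 = 1 := by
  rw [matPow]
  have h : cfc (fun x : ℝ => x ^ (0:ℝ)) A = cfc (fun _ : ℝ => (1:ℝ)) A :=
    cfc_congr fun x _ => Real.rpow_zero x
  rw [h, cfc_const_one ℝ A hA]

private lemma cpb_matPow_one {A : Matrix (Fin n) (Fin n) ℂ} (hA : _root_.IsSelfAdjoint A) :
    matPow A 1 = A := by
  rw [matPow]
  have h : cfc (fun x : ℝ => x ^ (1:ℝ)) A = cfc (fun x : ℝ => x) A :=
    cfc_congr fun x _ => Real.rpow_one x
  rw [h, cfc_id' ℝ A hA]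

private lemma cpb_matPow_comp {A : Matrix (Fin n) (Fin n) ℂ} (hA : A.PosDef) (s r : ℝ) :
    matPow (matPow A s) r = matPow A (s * r) := by
  rw [matPow, matPow, matPow]
  have hc := cfc_comp (fun x : ℝ => x ^ r) (fun x : ℝ => x ^ s) A hA.1
    (cpb_contOn_img _ _ A) (cpb_contOn_spec _ A)
  rw [← hc]
  apply cfc_congr
  intro x hx
  simp only [Function.comp_apply]
  exact (Real.rpow_mul (cpb_spec_pos hA x hx).le s r).symm

/-! ### Concrete spectral form -/

private lemma cpb_matPow_concrete {A : Matrix (Fin n) (Fin n) ℂ} (hA : A.IsHermitian) (s : ℝ) :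
    matPow A s = (hA.eigenvectorUnitary : Matrix (Fin n) (Fin n) ℂ) *
      diagonal ((Complex.ofReal : ℝ → ℂ) ∘ fun i => hA.eigenvalues i ^ s) *
      star (hA.eigenvectorUnitary : Matrix (Fin n) (Fin n) ℂ) := by
  rw [matPow, hA.cfc_eq]
  rfl

private lemma cpb_spectral_concrete {A : Matrix (Fin n) (Fin n) ℂ} (hA : A.IsHermitian) :
    A = (hA.eigenvectorUnitary : Matrix (Fin n) (Fin n) ℂ) *
      diagonal ((Complex.ofReal : ℝ → ℂ) ∘ hA.eigenvalues) *
      star (hA.eigenvectorUnitary : Matrix (Fin n) (Fin n) ℂ) :=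
  hA.spectral_theorem

private lemma cpb_col_unit {U : Matrix (Fin n) (Fin n) ℂ}
    (hU : U ∈ Matrix.unitaryGroup (Fin n) ℂ) (i : Fin n) :
    star (fun a => U a i) ⬝ᵥ (fun a => U a i) = 1 := by
  have h := congrFun (congrFun hU.1 i) i
  simpa [mul_apply, dotProduct, conjTranspose_apply, one_apply] using h

private lemma cpb_quad_conj (U : Matrix (Fin n) (Fin n) ℂ) (d : Fin n → ℝ) (v : Fin n → ℂ) :
    star v ⬝ᵥ ((U * diagonal ((Complex.ofReal : ℝ → ℂ) ∘ d) * star U) *ᵥ v) =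
      ∑ k, (d k : ℂ) * (Complex.normSq ((star U *ᵥ v) k) : ℝ) := by
  set c := star U *ᵥ v with hc
  rw [← mulVec_mulVec, ← mulVec_mulVec, dotProduct_mulVec]
  have h1 : star v ᵥ* U = star c := by
    rw [hc, star_mulVec, star_eq_conjTranspose, conjTranspose_conjTranspose]
  rw [h1, ← hc]
  simp only [dotProduct, mulVec_diagonal, Pi.star_apply, Function.comp_apply]
  refine Finset.sum_congr rfl fun k _ => ?_
  calc star (c k) * ((d k : ℂ) * c k) = (d k : ℂ) * (c k * star (c k)) := by ring
    _ = (d k : ℂ) * (Complex.normSq (c k) : ℝ) := by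
        rw [Complex.star_def, Complex.mul_conj]

private lemma cpb_trace_diag_mul (e : Fin n → ℂ) (N : Matrix (Fin n) (Fin n) ℂ) :
    (diagonal e * N).trace = ∑ i, e i * N i i := by
  simp [Matrix.trace, diag_apply, Matrix.diagonal_mul]

private lemma cpb_entry_conj (U M : Matrix (Fin n) (Fin n) ℂ) (i : Fin n) :
    (star U * M * U) i i = star (fun a => U a i) ⬝ᵥ (M *ᵥ fun a => U a i) := by
  simp only [mul_apply, dotProduct, mulVec, Pi.star_apply, star_eq_conjTranspose,
    conjTranspose_apply, Finset.sum_mul, Finset.mul_sum]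
  rw [Finset.sum_comm]
  refine Finset.sum_congr rfl fun a _ => Finset.sum_congr rfl fun b _ => by ring

private lemma cpb_trace_conj (U M : Matrix (Fin n) (Fin n) ℂ) (d : Fin n → ℝ) :
    ((U * diagonal ((Complex.ofReal : ℝ → ℂ) ∘ d) * star U) * M).trace =
      ∑ i, (d i : ℂ) * (star (fun a => U a i) ⬝ᵥ (M *ᵥ fun a => U a i)) := by
  have h : (U * diagonal ((Complex.ofReal : ℝ → ℂ) ∘ d) * star U) * M =
      U * (diagonal ((Complex.ofReal : ℝ → ℂ) ∘ d) * (star U * M)) := by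
    simp only [mul_assoc]
  rw [h, trace_mul_comm]
  have h2 : diagonal ((Complex.ofReal : ℝ → ℂ) ∘ d) * (star U * M) * U =
      diagonal ((Complex.ofReal : ℝ → ℂ) ∘ d) * (star U * M * U) := by
    simp only [mul_assoc]
  rw [h2, cpb_trace_diag_mul]
  exact Finset.sum_congr rfl fun i _ => by rw [Function.comp_apply, cpb_entry_conj]

/-! ### Positive definiteness -/

private lemma cpb_posDef_conj {U : Matrix (Fin n) (Fin n) ℂ}
    (hU : U ∈ Matrix.unitaryGroup (Fin n) ℂ) {d : Fin n → ℝ} (hd : ∀ i, 0 < d i) :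
    (U * diagonal ((Complex.ofReal : ℝ → ℂ) ∘ d) * star U).PosDef := by
  refine posDef_iff_dotProduct_mulVec.mpr ⟨?_, ?_⟩
  · have hdiag : (diagonal ((Complex.ofReal : ℝ → ℂ) ∘ d)).IsHermitian := by
      refine isHermitian_diagonal_of_self_adjoint _ ?_
      funext k
      simp [Pi.star_apply, Complex.star_def, Complex.conj_ofReal]
    have h := isHermitian_mul_mul_conjTranspose U hdiag
    rwa [← star_eq_conjTranspose] at h
  · intro v hv
    rw [cpb_quad_conj]
    set c := star U *ᵥ v with hcdef
    have hsum : ∑ k, (d k : ℂ) * (Complex.normSq (c k) : ℝ) =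
        ((∑ k, d k * Complex.normSq (c k) : ℝ) : ℂ) := by
      push_cast
      rfl
    rw [hsum, Complex.zero_lt_real]
    have hc0 : c ≠ 0 := by
      intro h
      apply hv
      have hrec : U *ᵥ c = v := by
        rw [hcdef, mulVec_mulVec, hU.2, one_mulVec]
      rw [h, mulVec_zero] at hrec
      exact hrec.symm
    obtain ⟨k, hk⟩ : ∃ k, c k ≠ 0 := by
      by_contra h
      push_neg at h
      exact hc0 (funext h)
    refine Finset.sum_pos' (fun k _ => mul_nonneg (hd k).le (Complex.normSq_nonneg _)) ?_
    exact ⟨k, Finset.mem_univ k, mul_pos (hd k) (Complex.normSq_pos.mpr hk)⟩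

private lemma cpb_matPow_posDef {A : Matrix (Fin n) (Fin n) ℂ} (hA : A.PosDef) (s : ℝ) :
    (matPow A s).PosDef := by
  rw [cpb_matPow_concrete hA.1]
  exact cpb_posDef_conj hA.1.eigenvectorUnitary.2
    fun i => Real.rpow_pos_of_pos (hA.eigenvalues_pos i) s

private lemma cpb_sum_mulVec {ι : Type*} (s : Finset ι) (M : ι → Matrix (Fin n) (Fin n) ℂ)
    (v : Fin n → ℂ) : (∑ j ∈ s, M j) *ᵥ v = ∑ j ∈ s, (M j *ᵥ v) := by
  funext a
  simp only [mulVec, dotProduct, Matrix.sum_apply, Finset.sum_mul]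
  rw [Finset.sum_comm]
  simp [mulVec, dotProduct, Finset.sum_apply]

private lemma cpb_dot_sum {ι : Type*} (s : Finset ι) (v : Fin n → ℂ) (u : ι → Fin n → ℂ) :
    v ⬝ᵥ (∑ j ∈ s, u j) = ∑ j ∈ s, v ⬝ᵥ u j := by
  simp only [dotProduct, Finset.sum_apply, Finset.mul_sum]
  rw [Finset.sum_comm]

private lemma cpb_posDef_weighted_sum {m : ℕ} (hm : Nonempty (Fin m))
    (B : Fin m → Matrix (Fin n) (Fin n) ℂ) (hB : ∀ j, (B j).PosDef)
    (w : Fin m → ℝ) (hw : ∀ j, 0 < w j) : (∑ j, w j • B j).PosDef := by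
  refine posDef_iff_dotProduct_mulVec.mpr ⟨?_, ?_⟩
  · have h : ∀ j, (w j • B j).IsHermitian := by
      intro j
      show _ = _
      rw [conjTranspose_smul, (hB j).1.eq, star_trivial]
    show _ = _
    rw [conjTranspose_sum]
    exact Finset.sum_congr rfl fun j _ => h j
  · intro v hv
    rw [cpb_sum_mulVec]
    have hterm : ∀ j, star v ⬝ᵥ (w j • B j) *ᵥ v = w j • (star v ⬝ᵥ (B j *ᵥ v)) := by
      intro j
      rw [smul_mulVec, dotProduct_smul]
    rw [cpb_dot_sum]
    rw [Finset.sum_congr rfl fun j _ => hterm j]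
    have hpos : ∀ j, 0 < star v ⬝ᵥ (B j *ᵥ v) := fun j => (hB j).dotProduct_mulVec_pos hv
    rw [Complex.lt_def]
    constructor
    · simp only [Complex.re_sum, Complex.zero_re]
      refine Finset.sum_pos (fun j _ => ?_) Finset.univ_nonempty
      have hre : 0 < (star v ⬝ᵥ (B j *ᵥ v)).re := (Complex.lt_def.mp (hpos j)).1
      simp only [Complex.real_smul, Complex.mul_re, Complex.ofReal_re, Complex.ofReal_im,
        zero_mul, sub_zero]
      exact mul_pos (hw j) hre
    · simp only [Complex.im_sum, Complex.zero_im]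
      refine (Finset.sum_eq_zero fun j _ => ?_).symm
      have him : (star v ⬝ᵥ (B j *ᵥ v)).im = 0 := (Complex.lt_def.mp (hpos j)).2.symm
      simp [Complex.real_smul, Complex.mul_im, him]

/-! ### Jensen's inequality for unit vectors -/

private lemma cpb_jensen {t : ℝ} (ht0 : 0 < t) (ht1 : t < 1) {X : Matrix (Fin n) (Fin n) ℂ}
    (hX : X.PosDef) {v : Fin n → ℂ} (hv1 : star v ⬝ᵥ v = 1) :
    ∃ q y : ℝ, star v ⬝ᵥ (X *ᵥ v) = (q : ℂ) ∧
      star v ⬝ᵥ (matPow X t *ᵥ v) = (y : ℂ) ∧ 0 < q ∧ 0 ≤ y ∧ y ≤ q ^ t ∧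
      (y = q ^ t → X *ᵥ v = (q : ℂ) • v) := by
  have hXh := hX.1
  set V : Matrix (Fin n) (Fin n) ℂ := (hXh.eigenvectorUnitary : Matrix (Fin n) (Fin n) ℂ)
    with hV
  set lam := hXh.eigenvalues with hlam
  set c : Fin n → ℂ := star V *ᵥ v with hcdef
  set w : Fin n → ℝ := fun k => Complex.normSq (c k) with hw
  have hwnn : ∀ k, 0 ≤ w k := fun k => Complex.normSq_nonneg _
  have hlampos : ∀ k, 0 < lam k := fun k => hX.eigenvalues_pos k
  have hw1 : ∑ k, w k = 1 := by
    have h := cpb_quad_conj V (fun _ => (1:ℝ)) v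
    have hd1 : diagonal ((Complex.ofReal : ℝ → ℂ) ∘ fun _ : Fin n => (1:ℝ)) = 1 := by
      simp [Function.comp_def]
    rw [hd1, mul_one] at h
    have h2 : V * star V = 1 := hXh.eigenvectorUnitary.2.2
    rw [h2, one_mulVec, hv1] at h
    have h3 : (1 : ℂ) = ((∑ k, w k : ℝ) : ℂ) := by
      rw [h, Complex.ofReal_sum]
      refine Finset.sum_congr rfl fun k _ => ?_
      rw [← hcdef] at *
      push_cast
      ring
    exact_mod_cast h3.symm
  have hqX : star v ⬝ᵥ (X *ᵥ v) = ((∑ k, w k * lam k : ℝ) : ℂ) := by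
    conv_lhs => rw [cpb_spectral_concrete hXh]
    rw [cpb_quad_conj, Complex.ofReal_sum]
    refine Finset.sum_congr rfl fun k _ => ?_
    rw [← hcdef]
    push_cast
    ring
  have hqY : star v ⬝ᵥ (matPow X t *ᵥ v) = ((∑ k, w k * lam k ^ t : ℝ) : ℂ) := by
    conv_lhs => rw [cpb_matPow_concrete hXh]
    rw [cpb_quad_conj, Complex.ofReal_sum]
    refine Finset.sum_congr rfl fun k _ => ?_
    rw [← hcdef]
    push_cast
    ring
  set q : ℝ := ∑ k, w k * lam k with hq
  set y : ℝ := ∑ k, w k * lam k ^ t with hy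
  have hqpos : 0 < q := by
    have h := hX.dotProduct_mulVec_pos (x := v) (by intro h0; rw [h0] at hv1; simp [dotProduct] at hv1)
    rw [hqX] at h
    exact Complex.zero_lt_real.mp h
  have hynn : 0 ≤ y :=
    Finset.sum_nonneg fun k _ => mul_nonneg (hwnn k)
      (Real.rpow_nonneg (hlampos k).le t)
  have hterm : ∀ k, w k * lam k ^ t ≤ w k * (q ^ t + t * q ^ (t - 1) * (lam k - q)) :=
    fun k => mul_le_mul_of_nonneg_left
      (cpb_tangent_le ht0 ht1 hqpos (hlampos k).le) (hwnn k)
  have hsum_eq : ∑ k, w k * (q ^ t + t * q ^ (t - 1) * (lam k - q)) = q ^ t := by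
    have expand : ∀ k, w k * (q ^ t + t * q ^ (t - 1) * (lam k - q)) =
        q ^ t * w k + (t * q ^ (t - 1)) * (w k * lam k) - (t * q ^ (t - 1) * q) * w k :=
      fun k => by ring
    rw [Finset.sum_congr rfl fun k _ => expand k]
    rw [Finset.sum_sub_distrib, Finset.sum_add_distrib, ← Finset.mul_sum, ← Finset.mul_sum,
      ← Finset.mul_sum, hw1, ← hq]
    ring
  have hjen : y ≤ q ^ t := by
    rw [hy, ← hsum_eq]
    exact Finset.sum_le_sum fun k _ => hterm k
  refine ⟨q, y, hqX, hqY, hqpos, hynn, hjen, ?_⟩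
  intro heq
  have hzero : ∑ k, (w k * (q ^ t + t * q ^ (t - 1) * (lam k - q)) - w k * lam k ^ t) = 0 := by
    rw [Finset.sum_sub_distrib, hsum_eq, ← hy, heq, sub_self]
  have hallzero := (Finset.sum_eq_zero_iff_of_nonneg
    (fun k _ => sub_nonneg.mpr (hterm k))).mp hzero
  have hlameq : ∀ k, w k ≠ 0 → lam k = q := by
    intro k hk
    by_contra hne
    have h1 : 0 < w k := lt_of_le_of_ne (hwnn k) (Ne.symm hk)
    have h2 := cpb_tangent_lt ht0 ht1 hqpos (hlampos k).le hne
    have h3 := hallzero k (Finset.mem_univ k)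
    nlinarith
  have hDc : diagonal ((Complex.ofReal : ℝ → ℂ) ∘ lam) *ᵥ c = (q : ℂ) • c := by
    funext k
    simp only [mulVec_diagonal, Function.comp_apply, Pi.smul_apply, smul_eq_mul]
    by_cases hck : c k = 0
    · rw [hck, mul_zero, mul_zero]
    · have hlq : lam k = q :=
        hlameq k (by rw [hw]; exact fun h0 => hck (Complex.normSq_eq_zero.mp h0))
      rw [hlq]
  have hrec : V *ᵥ c = v := by
    rw [hcdef, mulVec_mulVec, hXh.eigenvectorUnitary.2.2, one_mulVec]
  conv_lhs => rw [cpb_spectral_concrete hXh]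
  rw [← mulVec_mulVec, ← mulVec_mulVec, ← hcdef, hDc, mulVec_smul, hrec]

/-! ### The core trace inequality and its equality case -/

private lemma cpb_core {t : ℝ} (ht0 : 0 < t) (ht1 : t < 1) {X P : Matrix (Fin n) (Fin n) ℂ}
    (hX : X.PosDef) (hP : P.PosDef) :
    0 ≤ ((t • X + (1 - t) • P - matPow P (1 - t) * matPow X t).trace).re ∧
      (((t • X + (1 - t) • P - matPow P (1 - t) * matPow X t).trace).re = 0 → X = P) := by
  have hPh := hP.1
  set U : Matrix (Fin n) (Fin n) ℂ := (hPh.eigenvectorUnitary : Matrix (Fin n) (Fin n) ℂ)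
    with hU
  set d := hPh.eigenvalues with hd
  have hdpos : ∀ i, 0 < d i := fun i => hP.eigenvalues_pos i
  have hUmem : U ∈ Matrix.unitaryGroup (Fin n) ℂ := hPh.eigenvectorUnitary.2
  have hv1 : ∀ i, star (fun a => U a i) ⬝ᵥ (fun a => U a i) = 1 := cpb_col_unit hUmem
  have H : ∀ i : Fin n, ∃ q y : ℝ,
      star (fun a => U a i) ⬝ᵥ (X *ᵥ fun a => U a i) = (q : ℂ) ∧
      star (fun a => U a i) ⬝ᵥ (matPow X t *ᵥ fun a => U a i) = (y : ℂ) ∧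
      0 < q ∧ 0 ≤ y ∧ y ≤ q ^ t ∧
      (y = q ^ t → X *ᵥ (fun a => U a i) = (q : ℂ) • fun a => U a i) :=
    fun i => cpb_jensen ht0 ht1 hX (hv1 i)
  choose q y hq hy hqpos hynn hjen heqc using H
  have hone : U * diagonal ((Complex.ofReal : ℝ → ℂ) ∘ fun _ : Fin n => (1:ℝ)) * star U
      = 1 := by
    have hd1 : diagonal ((Complex.ofReal : ℝ → ℂ) ∘ fun _ : Fin n => (1:ℝ)) = 1 := by
      simp [Function.comp_def]
    rw [hd1, mul_one]
    exact hPh.eigenvectorUnitary.2.2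
  have T2 : X.trace = ((∑ i, q i : ℝ) : ℂ) := by
    have h := cpb_trace_conj U X (fun _ => (1:ℝ))
    rw [hone, one_mul] at h
    rw [h, Complex.ofReal_sum]
    exact Finset.sum_congr rfl fun i _ => by rw [hq i]; push_cast; ring
  have T3 : P.trace = ((∑ i, d i : ℝ) : ℂ) := by
    conv_lhs => rw [cpb_spectral_concrete hPh]
    have h := cpb_trace_conj U 1 d
    rw [mul_one] at h
    rw [h, Complex.ofReal_sum]
    refine Finset.sum_congr rfl fun i _ => ?_
    rw [one_mulVec, hv1 i, mul_one]
  have T1 : (matPow P (1 - t) * matPow X t).trace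
      = ((∑ i, d i ^ (1 - t) * y i : ℝ) : ℂ) := by
    conv_lhs => rw [cpb_matPow_concrete hPh]
    rw [cpb_trace_conj, Complex.ofReal_sum]
    exact Finset.sum_congr rfl fun i _ => by rw [hy i]; push_cast; ring
  have Etrace : (t • X + (1 - t) • P - matPow P (1 - t) * matPow X t).trace
      = ((∑ i, (t * q i + (1 - t) * d i - d i ^ (1 - t) * y i) : ℝ) : ℂ) := by
    rw [trace_sub, trace_add, trace_smul, trace_smul, T1, T2, T3]
    push_cast
    rw [Finset.smul_sum, Finset.smul_sum, ← Finset.sum_add_distrib, ← Finset.sum_sub_distrib]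
    refine Finset.sum_congr rfl fun i _ => ?_
    simp [Complex.real_smul]
  have Ere : ((t • X + (1 - t) • P - matPow P (1 - t) * matPow X t).trace).re
      = ∑ i, (t * q i + (1 - t) * d i - d i ^ (1 - t) * y i) := by
    rw [Etrace, Complex.ofReal_re]
  have htermnn : ∀ i, 0 ≤ t * q i + (1 - t) * d i - d i ^ (1 - t) * y i := by
    intro i
    have h1 : d i ^ (1 - t) * y i ≤ d i ^ (1 - t) * q i ^ t :=
      mul_le_mul_of_nonneg_left (hjen i) (Real.rpow_nonneg (hdpos i).le _)
    have h2 := cpb_amgm_le ht0 ht1 (hdpos i) (hqpos i).le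
    linarith
  constructor
  · rw [Ere]
    exact Finset.sum_nonneg fun i _ => htermnn i
  · intro hE
    rw [Ere] at hE
    have hall := (Finset.sum_eq_zero_iff_of_nonneg fun i _ => htermnn i).mp hE
    have hkey : ∀ i, X *ᵥ (fun a => U a i) = ((d i : ℂ)) • fun a => U a i := by
      intro i
      have h0 := hall i (Finset.mem_univ i)
      have hdt : (0:ℝ) < d i ^ (1 - t) := Real.rpow_pos_of_pos (hdpos i) _
      have hqd : q i = d i := by
        by_contra hne
        have hstrict := cpb_amgm_lt ht0 ht1 (hdpos i) (hqpos i).le hne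
        have h1 : d i ^ (1 - t) * y i ≤ d i ^ (1 - t) * q i ^ t :=
          mul_le_mul_of_nonneg_left (hjen i) hdt.le
        linarith
      have hyq : y i = q i ^ t := by
        have h2 := cpb_amgm_le ht0 ht1 (hdpos i) (hqpos i).le
        have h1 : d i ^ (1 - t) * y i ≤ d i ^ (1 - t) * q i ^ t :=
          mul_le_mul_of_nonneg_left (hjen i) hdt.le
        have h3 : d i ^ (1 - t) * y i = d i ^ (1 - t) * q i ^ t := by
          by_contra hne
          have h4 : d i ^ (1 - t) * y i < d i ^ (1 - t) * q i ^ t :=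
            lt_of_le_of_ne h1 hne
          linarith
        exact mul_left_cancel₀ hdt.ne' h3
      rw [← hqd]
      exact heqc i hyq
    have hPcol : ∀ i, P *ᵥ (fun a => U a i) = ((d i : ℂ)) • fun a => U a i := by
      intro i
      have hPU : P * U = U * diagonal ((Complex.ofReal : ℝ → ℂ) ∘ d) := by
        conv_lhs => rw [cpb_spectral_concrete hPh]
        rw [mul_assoc (U * diagonal ((Complex.ofReal : ℝ → ℂ) ∘ d)) (star U) U,
          hUmem.1, mul_one]
      funext a
      have h1 : (P *ᵥ fun b => U b i) a = (P * U) a i := by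
        simp [mulVec, mul_apply, dotProduct]
      rw [h1, hPU, mul_diagonal]
      simp [mul_comm]
    have hXU : X * U = P * U := by
      ext a i
      have h1 : (X * U) a i = (X *ᵥ fun b => U b i) a := by
        simp [mulVec, mul_apply, dotProduct]
      have h2 : (P * U) a i = (P *ᵥ fun b => U b i) a := by
        simp [mulVec, mul_apply, dotProduct]
      rw [h1, h2, hkey i, hPcol i]
    calc X = X * (U * star U) := by rw [hPh.eigenvectorUnitary.2.2, mul_one]
      _ = (X * U) * star U := by rw [mul_assoc]
      _ = (P * U) * star U := by rw [hXU]
      _ = P * (U * star U) := by rw [mul_assoc]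
      _ = P := by rw [hPh.eigenvectorUnitary.2.2, mul_one]

end Helpers

/-- For `t ∈ (0,1)`, pairwise commuting positive definite `A₁, …, A_m` and
positive weights summing to `1`, a positive definite `X₀` commuting with all `A_j` minimizes
`X ↦ Σ_j w_j Tr((1-t)A_j + tX - A_j^{1-t}X^t)` over positive definite matrices commuting with
all `A_j` if and only if it solves `X = Σ_j w_j A_j^{1-t} X^t`, i.e. it is the weighted power
mean of order `1-t`. -/
theorem commutative_power_barycenter {n m : ℕ} (t : ℝ) (ht0 : 0 < t) (ht1 : t < 1)
    (A : Fin m → Matrix (Fin n) (Fin n) ℂ) (hA : ∀ j, (A j).PosDef)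
    (hAcomm : ∀ j k, Commute (A j) (A k))
    (w : Fin m → ℝ) (hw : ∀ j, 0 < w j) (hw1 : ∑ j, w j = 1)
    (X₀ : Matrix (Fin n) (Fin n) ℂ) (hX₀ : X₀.PosDef) (hX₀A : ∀ j, Commute (A j) X₀) :
    (∀ X : Matrix (Fin n) (Fin n) ℂ, X.PosDef → (∀ j, Commute (A j) X) →
        ∑ j, w j * (((1 - t) • A j + t • X₀ - matPow (A j) (1 - t) * matPow X₀ t).trace).re ≤
          ∑ j, w j * (((1 - t) • A j + t • X - matPow (A j) (1 - t) * matPow X t).trace).re) ↔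
      X₀ = ∑ j, w j • (matPow (A j) (1 - t) * matPow X₀ t) := by
  classical
  have h1t : (0:ℝ) < 1 - t := by linarith
  have hm : Nonempty (Fin m) := by
    by_contra h
    rw [not_nonempty_iff] at h
    rw [Finset.univ_eq_empty, Finset.sum_empty] at hw1
    exact one_ne_zero hw1.symm
  set C : Matrix (Fin n) (Fin n) ℂ := ∑ j, w j • matPow (A j) (1 - t) with hC
  have hCpd : C.PosDef :=
    cpb_posDef_weighted_sum hm _ (fun j => cpb_matPow_posDef (hA j) _) w hw
  set Q : Matrix (Fin n) (Fin n) ℂ := matPow C (1 / (1 - t)) with hQdef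
  have hQpd : Q.PosDef := cpb_matPow_posDef hCpd _
  have hQC : matPow Q (1 - t) = C := by
    rw [hQdef, cpb_matPow_comp hCpd, one_div, inv_mul_cancel₀ h1t.ne', cpb_matPow_one hCpd.1]
  have hCAcomm : ∀ k, Commute (A k) C := by
    intro k
    rw [hC]
    exact Commute.sum_right _ _ _ fun j _ =>
      Commute.smul_right (cpb_commute_cfc _ (hAcomm k j)) _
  have hQAcomm : ∀ k, Commute (A k) Q := fun k => cpb_commute_cfc _ (hCAcomm k)
  have hsum_eq : ∀ Y : Matrix (Fin n) (Fin n) ℂ,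
      ∑ j, w j • (matPow (A j) (1 - t) * Y) = C * Y := by
    intro Y
    rw [hC, Finset.sum_mul]
    exact Finset.sum_congr rfl fun j _ => (smul_mul_assoc _ _ _).symm
  have hQfix : C * matPow Q t = Q := by
    rw [← hQC, cpb_matPow_mul hQpd, show (1 - t) + t = 1 by ring, cpb_matPow_one hQpd.1]
  have hX₀t : matPow X₀ t * matPow X₀ (-t) = 1 := by
    rw [cpb_matPow_mul hX₀, add_neg_cancel, cpb_matPow_zero hX₀.1]
  have hRHS : (X₀ = C * matPow X₀ t) ↔ X₀ = Q := by
    constructor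
    · intro h
      have h2 : matPow X₀ (1 - t) = C := by
        have h4 : matPow X₀ (1 - t) = X₀ * matPow X₀ (-t) := by
          conv_lhs => rw [show (1 - t) = 1 + (-t) by ring]
          rw [← cpb_matPow_mul hX₀ 1 (-t), cpb_matPow_one hX₀.1]
        rw [h4]
        nth_rewrite 1 [h]
        rw [mul_assoc, hX₀t, mul_one]
      rw [hQdef, ← h2, cpb_matPow_comp hX₀ (1 - t) (1 / (1 - t)),
        show (1 - t) * (1 / (1 - t)) = 1 by field_simp]
      exact (cpb_matPow_one hX₀.1).symm
    · intro h
      rw [h]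
      exact hQfix.symm
  -- the energy identity
  have hre : ∀ (r : ℝ) (z : ℂ), (r • z).re = r * z.re := fun r z => by
    simp [Complex.real_smul, Complex.mul_re]
  have hC_tr : ∀ Y : Matrix (Fin n) (Fin n) ℂ, ((C * Y).trace).re
      = ∑ j, w j * ((matPow (A j) (1 - t) * Y).trace).re := by
    intro Y
    rw [← hsum_eq Y, trace_sum, Complex.re_sum]
    refine Finset.sum_congr rfl fun j _ => ?_
    rw [trace_smul, hre]
  have hterm : ∀ (j : Fin m) (X : Matrix (Fin n) (Fin n) ℂ),
      (((1 - t) • A j + t • X - matPow (A j) (1 - t) * matPow X t).trace).re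
      = (1 - t) * ((A j).trace).re + t * (X.trace).re
        - ((matPow (A j) (1 - t) * matPow X t).trace).re := by
    intro j X
    rw [trace_sub, trace_add, trace_smul, trace_smul, Complex.sub_re, Complex.add_re,
      hre, hre]
  have hQside : ∀ X : Matrix (Fin n) (Fin n) ℂ,
      (((t • X + (1 - t) • Q - matPow Q (1 - t) * matPow X t).trace)).re
      = t * (X.trace).re + (1 - t) * (Q.trace).re - ((C * matPow X t).trace).re := by
    intro X
    rw [hQC, trace_sub, trace_add, trace_smul, trace_smul, Complex.sub_re, Complex.add_re,
      hre, hre]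
  have S_eq : ∀ X : Matrix (Fin n) (Fin n) ℂ,
      ∑ j, w j * (((1 - t) • A j + t • X - matPow (A j) (1 - t) * matPow X t).trace).re
      = (∑ j, w j * ((1 - t) * ((A j).trace).re)) - (1 - t) * (Q.trace).re
        + ((t • X + (1 - t) • Q - matPow Q (1 - t) * matPow X t).trace).re := by
    intro X
    rw [hQside X, hC_tr (matPow X t)]
    rw [Finset.sum_congr rfl fun j _ => by rw [hterm j X]]
    simp only [mul_sub, mul_add]
    rw [Finset.sum_sub_distrib, Finset.sum_add_distrib, ← Finset.sum_mul, hw1, one_mul]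
    ring
  have heQ : ((t • Q + (1 - t) • Q - matPow Q (1 - t) * matPow Q t).trace).re = 0 := by
    have hz : t • Q + (1 - t) • Q - matPow Q (1 - t) * matPow Q t = 0 := by
      rw [← hQC] at hQfix
      rw [hQfix, ← add_smul, show t + (1 - t) = (1:ℝ) by ring, one_smul, sub_self]
    rw [hz, trace_zero, Complex.zero_re]
  rw [show (∑ j, w j • (matPow (A j) (1 - t) * matPow X₀ t)) = C * matPow X₀ t from
    hsum_eq _, hRHS]
  constructor
  · intro hmin
    have h1 := hmin Q hQpd hQAcomm
    rw [S_eq X₀, S_eq Q, heQ] at h1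
    have h2 := (cpb_core ht0 ht1 hX₀ hQpd).1
    exact (cpb_core ht0 ht1 hX₀ hQpd).2 (le_antisymm (by linarith) h2)
  · intro hX₀Q X hXpd hXcomm
    rw [S_eq X₀, S_eq X]
    have h1 : ((t • X₀ + (1 - t) • Q - matPow Q (1 - t) * matPow X₀ t).trace).re = 0 := by
      rw [hX₀Q]
      exact heQ
    have h2 := (cpb_core ht0 ht1 hXpd hQpd).1
    linarith
end

section
/- Let A and B be commuting positive definite n×n complex matrices. Then lim_{t → 0⁺} (1/t)·Tr((1-t)A + tB − A^{1-t}B^t) = Tr(A(log A − log B) + B − A). -/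
open Matrix Filter
open scoped ComplexOrder Topology

/-- The logarithm of a positive definite matrix, via the functional calculus. -/
noncomputable def matLog {n : ℕ} (A : Matrix (Fin n) (Fin n) ℂ) : Matrix (Fin n) (Fin n) ℂ :=
  cfc Real.log A

section aux
variable {m : ℕ}

attribute [local instance] Matrix.instL2OpNormedRing Matrix.instL2OpNormedAlgebra

local instance : FiniteDimensional ℝ (Matrix (Fin m) (Fin m) ℂ) :=
  Module.Finite.trans ℂ (Matrix (Fin m) (Fin m) ℂ)

local instance : CompleteSpace (Matrix (Fin m) (Fin m) ℂ) :=
  FiniteDimensional.complete ℝ _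

lemma spec_pos' {A : Matrix (Fin m) (Fin m) ℂ} (hA : A.PosDef) :
    ∀ x ∈ spectrum ℝ A, 0 < x := by
  intro x hx
  rw [hA.isHermitian.spectrum_real_eq_range_eigenvalues] at hx
  obtain ⟨i, rfl⟩ := hx
  exact hA.eigenvalues_pos i

lemma matPow_eq_exp' {A : Matrix (Fin m) (Fin m) ℂ} (hA : A.PosDef) (s : ℝ) :
    matPow A s = NormedSpace.exp (s • matLog A) := by
  have hsa : IsSelfAdjoint A := hA.1
  have hspec := spec_pos' hA
  have hlog : ContinuousOn Real.log (spectrum ℝ A) := by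
    have : ∀ x ∈ spectrum ℝ A, x ≠ 0 := fun x hx => (hspec x hx).ne'
    fun_prop (disch := assumption)
  have h1 : matPow A s = cfc (fun x : ℝ => Real.exp (s * Real.log x)) A := by
    refine cfc_congr fun x hx => ?_
    rw [Real.rpow_def_of_pos (hspec x hx), mul_comm]
  have h2 : cfc (fun x : ℝ => Real.exp (s * Real.log x)) A
      = cfc Real.exp (cfc (fun x : ℝ => s * Real.log x) A) := by
    rw [← cfc_comp' Real.exp (fun x : ℝ => s * Real.log x) A (by fun_prop)
      (by fun_prop (disch := exact fun x hx => (hspec x hx).ne'))]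
  have h3 : cfc (fun x : ℝ => s * Real.log x) A = s • matLog A := by
    rw [matLog, ← cfc_smul s Real.log A]
    simp [smul_eq_mul]
  have hL : IsSelfAdjoint (matLog A) := cfc_predicate Real.log A
  rw [h1, h2, h3, CFC.real_exp_eq_normedSpace_exp (IsSelfAdjoint.smul (star_trivial s) hL)]

lemma commute_aeval' {A B : Matrix (Fin m) (Fin m) ℂ} (hAB : Commute A B) (p : Polynomial ℝ) :
    Commute (Polynomial.aeval A p) B := by
  induction p using Polynomial.induction_on with
  | C r =>
    have h : Commute ((algebraMap ℝ (Matrix (Fin m) (Fin m) ℂ)) r) B := Algebra.commutes r B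
    simpa using h
  | add p q hp hq => simpa [map_add] using hp.add_left hq
  | monomial k r _ =>
    have h : Commute ((algebraMap ℝ (Matrix (Fin m) (Fin m) ℂ)) r) B := Algebra.commutes r B
    simp only [_root_.map_mul, _root_.map_pow, Polynomial.aeval_C, Polynomial.aeval_X]
    exact h.mul_left (hAB.pow_left _)

lemma commute_cfc_left' {A B : Matrix (Fin m) (Fin m) ℂ} (hA : IsSelfAdjoint A)
    (hAB : Commute A B) (f : ℝ → ℝ) : Commute (cfc f A) B := by
  classical
  set s := (Matrix.finite_real_spectrum (A := A)).toFinset with hs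
  set p := Lagrange.interpolate s id f with hp
  have h1 : cfc f A = cfc p.eval A := by
    refine cfc_congr fun x hx => ?_
    exact (Lagrange.eval_interpolate_at_node (v := id) (r := f) Function.injective_id.injOn
      ((Matrix.finite_real_spectrum (A := A)).mem_toFinset.mpr hx)).symm
  rw [h1, cfc_polynomial p A hA]
  exact commute_aeval' hAB p

lemma matLog_comm' {A B : Matrix (Fin m) (Fin m) ℂ} (hA : IsSelfAdjoint A)
    (hB : IsSelfAdjoint B) (hAB : Commute A B) : Commute (matLog A) (matLog B) := by
  have h1 : Commute (matLog A) B := commute_cfc_left' hA hAB Real.log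
  exact (commute_cfc_left' hB h1.symm Real.log).symm

lemma matPow_mul_matPow' {A B : Matrix (Fin m) (Fin m) ℂ} (hA : A.PosDef) (hB : B.PosDef)
    (hAB : Commute A B) (t : ℝ) :
    matPow A (1 - t) * matPow B t =
      A * NormedSpace.exp (t • (matLog B - matLog A)) := by
  have hL : Commute (matLog A) (matLog B) := matLog_comm' hA.1 hB.1 hAB
  rw [matPow_eq_exp' hA, matPow_eq_exp' hB,
    ← Matrix.exp_add_of_commute _ _ ((hL.smul_left (1 - t)).smul_right t)]
  have heq : (1 - t) • matLog A + t • matLog B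
      = matLog A + t • (matLog B - matLog A) := by
    rw [smul_sub, sub_smul, one_smul]; abel
  have hCm : Commute (matLog A) (t • (matLog B - matLog A)) :=
    (hL.sub_right (Commute.refl _)).smul_right t
  rw [heq, Matrix.exp_add_of_commute _ _ hCm]
  congr 1
  open scoped MatrixOrder in exact CFC.exp_log A hA.isStrictlyPositive

/-- For commuting positive definite `A, B`,
`lim_{t→0⁺} (1/t)·Tr((1-t)A + tB − A^{1-t}B^t) = Tr(A(log A − log B) + B − A)`. -/
theorem tendsto_hellinger_to_relative_entropy {n : ℕ}
    (A B : Matrix (Fin n) (Fin n) ℂ) (hA : A.PosDef) (hB : B.PosDef) (hAB : Commute A B) :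
    Tendsto
      (fun t : ℝ =>
        (1 / t) * (((1 - t) • A + t • B - matPow A (1 - t) * matPow B t).trace).re)
      (𝓝[>] 0)
      (𝓝 (((A * (matLog A - matLog B) + B - A).trace).re)) := by
  classical
  set C := matLog B - matLog A with hC
  let φ : Matrix (Fin n) (Fin n) ℂ →ₗ[ℝ] ℝ :=
    Complex.reLm.comp ((Matrix.traceLinearMap (Fin n) ℂ ℂ).restrictScalars ℝ)
  have hφ : ∀ M : Matrix (Fin n) (Fin n) ℂ, φ M = M.trace.re := fun _ => rfl
  set g : ℝ → ℝ := fun t => φ ((1 - t) • A + t • B - A * NormedSpace.exp (t • C)) with hg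
  have hm : HasDerivAt (fun t : ℝ => (1 - t) • A + t • B - A * NormedSpace.exp (t • C))
      (((-1 : ℝ) • A + (1 : ℝ) • B) - A * (NormedSpace.exp ((0:ℝ) • C) * C)) 0 := by
    have h1 : HasDerivAt (fun t : ℝ => (1 - t) • A) ((-1 : ℝ) • A) 0 := by
      simpa using ((hasDerivAt_id (0:ℝ)).const_sub 1).smul_const A
    have h2 : HasDerivAt (fun t : ℝ => t • B) ((1 : ℝ) • B) 0 :=
      (hasDerivAt_id (0:ℝ)).smul_const B
    have h3 : HasDerivAt (fun t : ℝ => A * NormedSpace.exp (t • C))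
        (A * (NormedSpace.exp ((0:ℝ) • C) * C)) 0 :=
      (hasDerivAt_exp_smul_const C (0:ℝ)).const_mul A
    exact (h1.add h2).sub h3
  have hD : (((-1 : ℝ) • A + (1 : ℝ) • B) - A * (NormedSpace.exp ((0:ℝ) • C) * C))
      = A * (matLog A - matLog B) + B - A := by
    simp only [zero_smul, NormedSpace.exp_zero, one_mul, neg_one_smul, one_smul, hC]
    rw [mul_sub, mul_sub]
    abel
  rw [hD] at hm
  have hg' : HasDerivAt g (φ (A * (matLog A - matLog B) + B - A)) 0 :=
    (φ.toContinuousLinearMap.hasFDerivAt).comp_hasDerivAt 0 hm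
  rw [hasDerivAt_iff_tendsto_slope] at hg'
  have hg0 : g 0 = 0 := by simp [hg, hφ]
  have hfun : (fun t : ℝ =>
        (1 / t) * (((1 - t) • A + t • B - matPow A (1 - t) * matPow B t).trace).re)
      = slope g 0 := by
    funext t
    rw [matPow_mul_matPow' hA hB hAB t, slope_def_field, hg0, sub_zero, sub_zero,
      one_div, inv_mul_eq_div]
    rfl
  rw [hfun]
  have hval : φ (A * (matLog A - matLog B) + B - A)
      = ((A * (matLog A - matLog B) + B - A).trace).re := hφ _
  rw [hval] at hg'
  exact hg'.mono_left (nhdsWithin_mono 0 fun x hx => by simpa using ne_of_gt hx)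

end aux
end
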